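/- Let F be an even real-valued Schwartz function with F̂ even. For θ > 0 define g_θ(t) = (F ⋆ (H·cos(·√θ)))(t) + (F ⋆ (H·cos(·√θ)))(−t) (the even part construction). Then g_θ(t) = F̂(√θ)·cos(t√θ) for all t. -/

import Mathlib

open MeasureTheory

private lemma indicator_mul_helper (c : ℝ) (g : ℝ → ℝ) (s : ℝ) :
    g s * Set.indicator (Set.Ioi (0 : ℝ)) (fun v => Real.cos (v * c)) s
      = Set.indicator (Set.Ioi (0 : ℝ)) (fun v => g v * Real.cos (v * c)) s := by
  by_cases h : s ∈ Set.Ioi (0 : ℝ) <;> simp [Set.indicator_apply, h]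

/-- Even-part construction (scalar content of Appendix A): for an even Schwartz `F` with
even Fourier transform `F̂(ω) = ∫ F(t)cos(ωt)dt` and `θ > 0`, the even part
`g_θ(t) = (F ⋆ H·cos(·√θ))(t) + (F ⋆ H·cos(·√θ))(−t)` equals `F̂(√θ)·cos(t√θ)`. -/
theorem even_part_heaviside_cos (θ : ℝ) (hθ : 0 < θ)
    (F : SchwartzMap ℝ ℝ) (hFeven : ∀ t, F (-t) = F t)
    (hatF : ℝ → ℝ) (hhatF : ∀ ω, hatF ω = ∫ t, F t * Real.cos (ω * t))
    (hhatFeven : ∀ ω, hatF (-ω) = hatF ω)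
    (conv : ℝ → ℝ)
    (hconv : ∀ t, conv t =
      ∫ s, F (t - s) * Set.indicator (Set.Ioi (0 : ℝ)) (fun v => Real.cos (v * Real.sqrt θ)) s) :
    ∀ t : ℝ, conv t + conv (-t) = hatF (Real.sqrt θ) * Real.cos (t * Real.sqrt θ) := by
  intro t
  set c := Real.sqrt θ with hc
  -- integrability of F(a - ·) times any bounded measurable function
  have hFint : Integrable (⇑F) volume := F.integrable
  have hbdd_mul : ∀ (a : ℝ) (b : ℝ → ℝ), Measurable b → (∀ x, |b x| ≤ 1) →
      Integrable (fun s => F (a - s) * b s) volume := by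
    intro a b hb hb1
    have h1 : Integrable (fun s => F (a - s)) volume := hFint.comp_sub_left a
    have := h1.bdd_mul (f := b) hb.aestronglyMeasurable (c := 1) (ae_of_all _ fun x => by simpa [Real.norm_eq_abs] using hb1 x)
    simpa [mul_comm] using this
  have hcosb : ∀ x : ℝ, |Real.cos (x * c)| ≤ 1 := fun x => Real.abs_cos_le_one _
  have hcosm : Measurable (fun x : ℝ => Real.cos (x * c)) :=
    (Real.continuous_cos.comp (continuous_id.mul continuous_const)).measurable
  -- the full-line convolution kernel
  have hG : ∀ a : ℝ, Integrable (fun s => F (a - s) * Real.cos (s * c)) volume :=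
    fun a => hbdd_mul a _ hcosm hcosb
  -- Step: conv a = ∫ s in Ioi 0, F (a - s) * cos (s c)
  have hconv' : ∀ a : ℝ, conv a = ∫ s in Set.Ioi (0 : ℝ), F (a - s) * Real.cos (s * c) := by
    intro a
    rw [hconv a]
    rw [show (fun s => F (a - s) * Set.indicator (Set.Ioi (0 : ℝ))
        (fun v => Real.cos (v * c)) s)
      = fun s => Set.indicator (Set.Ioi (0 : ℝ)) (fun v => F (a - v) * Real.cos (v * c)) s from
        funext fun s => indicator_mul_helper c (fun v => F (a - v)) s]
    exact integral_indicator measurableSet_Ioi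
  -- Split the full-line integral for `t`
  have hsplit : (∫ s, F (t - s) * Real.cos (s * c))
      = (∫ s in Set.Ioi (0 : ℝ), F (t - s) * Real.cos (s * c))
        + ∫ s in Set.Iic (0 : ℝ), F (t - s) * Real.cos (s * c) := by
    rw [← integral_add_compl measurableSet_Ioi (hG t), Set.compl_Ioi]
  -- Negative half-line becomes conv (-t)
  have hneg : (∫ s in Set.Iic (0 : ℝ), F (t - s) * Real.cos (s * c)) = conv (-t) := by
    have := integral_comp_neg_Ioi (0 : ℝ) (fun s => F (t - s) * Real.cos (s * c))
    rw [neg_zero] at this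
    rw [← this, hconv' (-t)]
    apply setIntegral_congr_fun measurableSet_Ioi
    intro s _
    simp only
    rw [show t - -s = t + s by ring, show -s * c = -(s * c) by ring, Real.cos_neg,
      show -t - s = -(t + s) by ring, hFeven]
  -- So conv t + conv (-t) is the full-line integral
  have hkey : conv t + conv (-t) = ∫ s, F (t - s) * Real.cos (s * c) := by
    rw [hsplit, hneg, hconv' t]
  rw [hkey]
  -- Change variables u = t - s
  have hsub : (∫ s, F (t - s) * Real.cos (s * c))
      = ∫ u, F u * Real.cos ((t - u) * c) := by
    have := integral_sub_left_eq_self (fun u => F u * Real.cos ((t - u) * c)) volume t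
    rw [← this]
    congr 1
    funext s
    simp
  rw [hsub]
  -- Expand cos((t-u)c)
  have hexp : ∀ u : ℝ, F u * Real.cos ((t - u) * c)
      = Real.cos (t * c) * (F u * Real.cos (u * c))
        + Real.sin (t * c) * (F u * Real.sin (u * c)) := by
    intro u
    have : (t - u) * c = t * c - u * c := by ring
    rw [this, Real.cos_sub]
    ring
  simp_rw [hexp]
  have hsinb : ∀ x : ℝ, |Real.sin (x * c)| ≤ 1 := fun x => Real.abs_sin_le_one _
  have hsinm : Measurable (fun x : ℝ => Real.sin (x * c)) :=
    (Real.continuous_sin.comp (continuous_id.mul continuous_const)).measurable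
  have hFcos : Integrable (fun u => F u * Real.cos (u * c)) volume := by
    have := hFint.bdd_mul (f := fun x : ℝ => Real.cos (x * c))
      hcosm.aestronglyMeasurable (c := 1) (ae_of_all _ fun x => by simpa [Real.norm_eq_abs] using hcosb x)
    simpa [mul_comm] using this
  have hFsin : Integrable (fun u => F u * Real.sin (u * c)) volume := by
    have := hFint.bdd_mul (f := fun x : ℝ => Real.sin (x * c))
      hsinm.aestronglyMeasurable (c := 1) (ae_of_all _ fun x => by simpa [Real.norm_eq_abs] using hsinb x)
    simpa [mul_comm] using this
  rw [integral_add (hFcos.const_mul _) (hFsin.const_mul _),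
    integral_const_mul, integral_const_mul]
  -- the sine integral vanishes by oddness
  have hodd : (∫ u, F u * Real.sin (u * c)) = 0 := by
    have h1 := integral_neg_eq_self (fun u => F u * Real.sin (u * c)) volume
    have h2 : (∫ u, F (-u) * Real.sin (-u * c)) = ∫ u, -(F u * Real.sin (u * c)) := by
      congr 1
      funext u
      rw [hFeven u, show -u * c = -(u * c) by ring, Real.sin_neg]
      ring
    rw [h2, integral_neg] at h1
    linarith
  rw [hodd]
  -- identify with hatF
  have hhat : hatF c = ∫ u, F u * Real.cos (u * c) := by
    rw [hhatF c]
    congr 1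
    funext u
    rw [mul_comm u c]
  rw [← hhat]
  ring
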